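/- In the two-player zero-sum 2×2 game with payoffs u_1(1,1) = v, u_1(2,2) = 1, u_1(1,2) = u_1(2,1) = 0, and u_2 = −u_1, where v > 0, the unique correlated equilibrium is the product distribution in which each player independently plays action 1 with probability 1/(v+1) and action 2 with probability v/(v+1). -/

import Mathlib

open Finset

/-- In the 2×2 zero-sum game with `u₁(1,1) = v > 0`, `u₁(2,2) = 1` and
    `u₁ = 0` off-diagonal (`u₂ = -u₁`), the unique correlated equilibrium is the
    product distribution where each player independently plays action 1 with
    probability `1/(v+1)` and action 2 with probability `v/(v+1)`.
    (Action 1 is encoded as `0 : Fin 2`, action 2 as `1 : Fin 2`.) -/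
theorem unique_correlated_2x2 (v : ℝ) (hv : 0 < v)
    (u₁ : Fin 2 → Fin 2 → ℝ)
    (hu₁ : ∀ a b, u₁ a b = if a = 0 ∧ b = 0 then v else if a = 1 ∧ b = 1 then 1 else 0)
    (x : Fin 2 × Fin 2 → ℝ)
    (hx0 : ∀ p, 0 ≤ x p) (hx1 : ∑ p, x p = 1) :
    ((∀ a j : Fin 2, ∑ b, (u₁ j b - u₁ a b) * x (a, b) ≤ 0) ∧
     (∀ b j : Fin 2, ∑ a, ((-u₁ a j) - (-u₁ a b)) * x (a, b) ≤ 0))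
    ↔
    (∀ a b : Fin 2,
      x (a, b) = (if a = 0 then 1 / (v + 1) else v / (v + 1)) *
                 (if b = 0 then 1 / (v + 1) else v / (v + 1))) := by
  have hv1 : v + 1 ≠ 0 := by positivity
  simp only [Fintype.sum_prod_type, Fin.sum_univ_two, Prod.mk_zero_zero, Prod.mk_one_one] at hx1
  constructor
  · rintro ⟨h1, h2⟩
    have e1 := h1 0 1
    have e2 := h1 1 0
    have e3 := h2 0 1
    have e4 := h2 1 0
    simp only [Fin.sum_univ_two, hu₁] at e1 e2 e3 e4
    norm_num at e1 e2 e3 e4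
    simp only [Prod.mk_zero_zero, Prod.mk_one_one] at e1 e2 e3 e4
    -- e1 : x (0,1) ≤ v * x 0 ; e2 : v * x (1,0) ≤ x 1
    -- e3 : v * x 0 ≤ x (1,0) ; e4 : x 1 ≤ v * x (0,1)
    have m1 : v * x (0, 1) ≤ v * (v * x 0) := mul_le_mul_of_nonneg_left e1 hv.le
    have m3 : v * (v * x 0) ≤ v * x (1, 0) := mul_le_mul_of_nonneg_left e3 hv.le
    have c3 : x 1 = v * x (0, 1) := le_antisymm e4 (by linarith)
    have c1 : x (0, 1) = v * x 0 :=
      mul_left_cancel₀ hv.ne' (le_antisymm m1 (by linarith))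
    have c2 : v * x 0 = x (1, 0) :=
      mul_left_cancel₀ hv.ne' (le_antisymm m3 (by linarith))
    have hA : x 0 * ((v + 1) * (v + 1)) = 1 := by
      linear_combination hx1 - (1 + v) * c1 + c2 - c3
    intro a b
    fin_cases a <;> fin_cases b <;> norm_num <;> field_simp
    · simp only [Prod.mk_zero_zero]; linarith [hA]
    · linear_combination ((v + 1) * (v + 1)) * c1 + v * hA
    · linear_combination -((v + 1) * (v + 1)) * c2 + v * hA
    · linear_combination ((v + 1) * (v + 1)) * c3 + v * ((v + 1) * (v + 1)) * c1 + v * v * hA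
  · intro h
    constructor <;> intro a j <;> fin_cases a <;> fin_cases j <;>
      simp only [Fin.sum_univ_two, hu₁, h] <;> norm_num <;> field_simp <;> ring <;> norm_num
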